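/- Let d ≥ 1, let V ⊂ ℤ^d be finite and let η : V → ℕ be any height configuration on V. Then the set M = {m : V → ℕ : η(x) − (Δ_V m)(x) ≤ 2d for all x ∈ V} of stabilizing toppling vectors is nonempty and has a pointwise least element m_V^η; in particular the finite-volume abelian sandpile stabilization equation η − Δ_V m = ξ with ξ stable always has a minimal solution. -/
import Mathlib


open MeasureTheory
open scoped ENNReal

/-- Nearest-neighbour adjacency on `ℤ^d`: `|x - y| = 1`. -/
def adj (d : ℕ) (x y : Fin d → ℤ) : Prop := (∑ i, (x i - y i).natAbs) = 1

instance (d : ℕ) (x y : Fin d → ℤ) : Decidable (adj d x y) := by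
  unfold adj; infer_instance

/-- The finite-volume toppling operator `(Δ_V m)(x)`, for `x ∈ V`. -/
def lapV (d : ℕ) (V : Finset (Fin d → ℤ)) (m : (Fin d → ℤ) → ℕ) (x : Fin d → ℤ) : ℤ :=
  2 * d * (m x : ℤ) - ∑ y ∈ V.filter (fun y => adj d x y), (m y : ℤ)

/-- `m` is a vector of toppling numbers making `η` stable in `V`:
`η(x) - (Δ_V m)(x) ≤ 2d` for all `x ∈ V`. -/
def Stabilizes (d : ℕ) (V : Finset (Fin d → ℤ)) (η m : (Fin d → ℤ) → ℕ) : Prop :=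
  ∀ x ∈ V, (η x : ℤ) - lapV d V m x ≤ 2 * d

/-- `m` is the pointwise least (on `V`) vector of toppling numbers stabilizing `η` in `V`,
i.e. `m = m_V^η` on `V`. -/
def IsMinStab (d : ℕ) (V : Finset (Fin d → ℤ)) (η m : (Fin d → ℤ) → ℕ) : Prop :=
  Stabilizes d V η m ∧ ∀ m', Stabilizes d V η m' → ∀ x ∈ V, m x ≤ m' x

/-- `η` is stabilizable: for every `x`, `sup_V m_V^η(x) < ∞`. -/
def Stabilizable (d : ℕ) (η : (Fin d → ℤ) → ℕ) : Prop :=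
  ∀ x : Fin d → ℤ, ∃ C : ℕ, ∀ (V : Finset (Fin d → ℤ)) (m : (Fin d → ℤ) → ℕ),
    IsMinStab d V η m → x ∈ V → m x ≤ C

/-- The set `𝒮` of stabilizable configurations. -/
def StabSet (d : ℕ) : Set ((Fin d → ℤ) → ℕ) := {η | Stabilizable d η}

/-- The set of height configurations (all heights at least `1`). -/
def Heights (d : ℕ) : Set ((Fin d → ℤ) → ℕ) := {η | ∀ x, 1 ≤ η x}

/-- The coordinate shift `τ_z η (x) = η (x + z)`. -/
def shiftC (d : ℕ) (z : Fin d → ℤ) (η : (Fin d → ℤ) → ℕ) : (Fin d → ℤ) → ℕ :=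
  fun x => η (x + z)

/-- `ν` is stationary (translation invariant). -/
def Stationary (d : ℕ) (ν : Measure ((Fin d → ℤ) → ℕ)) : Prop :=
  ∀ z : Fin d → ℤ, MeasurePreserving (shiftC d z) ν ν

/-- `ν` is ergodic under the shift action: shift-invariant Borel sets are trivial. -/
def ErgodicShift (d : ℕ) (ν : Measure ((Fin d → ℤ) → ℕ)) : Prop :=
  ∀ A : Set ((Fin d → ℤ) → ℕ), MeasurableSet A → (∀ z, shiftC d z ⁻¹' A = A) →
    ν A = 0 ∨ ν A = 1


lemma sum_natAbs_one {d : ℕ} {f : Fin d → ℕ} (h : ∑ i, f i = 1) :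
    ∃ i, f i = 1 ∧ ∀ j, j ≠ i → f j = 0 := by
  obtain ⟨i, hi⟩ : ∃ i, f i ≠ 0 := by
    by_contra hc
    push_neg at hc
    simp [hc] at h
  have h1 : f i ≤ 1 := h ▸ Finset.single_le_sum (fun j _ => Nat.zero_le _) (Finset.mem_univ i)
  have hfi : f i = 1 := le_antisymm h1 (Nat.one_le_iff_ne_zero.mpr hi)
  have hsum := Finset.sum_erase_add Finset.univ f (Finset.mem_univ i)
  rw [h, hfi] at hsum
  have herase : ∑ j ∈ Finset.univ.erase i, f j = 0 := by omega
  exact ⟨i, hfi, fun j hj =>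
    Finset.sum_eq_zero_iff.mp herase j (Finset.mem_erase.mpr ⟨hj, Finset.mem_univ j⟩)⟩

lemma adj_eq {d : ℕ} {x y : Fin d → ℤ} (h : adj d x y) :
    ∃ i : Fin d, ∃ ε : ℤ, (ε = 1 ∨ ε = -1) ∧ y = Function.update x i (x i + ε) := by
  obtain ⟨i, hi1, hi0⟩ := sum_natAbs_one h
  refine ⟨i, y i - x i, ?_, ?_⟩
  · rcases Int.natAbs_eq_iff.mp hi1 with h' | h'
    · right; omega
    · left; omega
  · funext j
    by_cases hj : j = i
    · subst hj; simp
    · have h0 := Int.natAbs_eq_zero.mp (hi0 j hj)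
      rw [Function.update_of_ne hj]
      omega

lemma Q_update {d : ℕ} (x : Fin d → ℤ) (i : Fin d) (a : ℤ) :
    ∑ j, (Function.update x i a j) ^ 2 = (∑ j, (x j) ^ 2) - (x i) ^ 2 + a ^ 2 := by
  have h1 : ∀ j, (Function.update x i a j) ^ 2 = Function.update (fun k => (x k) ^ 2) i (a ^ 2) j :=
    fun j => Function.apply_update (fun _ v => v ^ 2) x i a j
  rw [Finset.sum_congr rfl (fun j _ => h1 j), Finset.sum_update_of_mem (Finset.mem_univ i),
    Finset.sum_eq_sum_sdiff_singleton_add (Finset.mem_univ i) (fun j => (x j) ^ 2)]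
  ring

/-- The full lattice neighbourhood of `x`. -/
def nb (d : ℕ) (x : Fin d → ℤ) : Finset (Fin d → ℤ) :=
  Finset.univ.image (fun p : Fin d × Bool => Function.update x p.1 (x p.1 + (if p.2 then 1 else -1)))

lemma mem_nb_adj {d : ℕ} {V : Finset (Fin d → ℤ)} (x : Fin d → ℤ) :
    V.filter (fun y => adj d x y) ⊆ nb d x := by
  intro y hy
  have hadj := (Finset.mem_filter.mp hy).2
  obtain ⟨i, ε, hε, hy'⟩ := adj_eq hadj
  rcases hε with h | h
  · exact Finset.mem_image.mpr ⟨(i, true), Finset.mem_univ _, by simp [hy', h]⟩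
  · exact Finset.mem_image.mpr ⟨(i, false), Finset.mem_univ _, by simp [hy', h]⟩

lemma sum_nb {d : ℕ} (x : Fin d → ℤ) (g : (Fin d → ℤ) → ℤ) :
    ∑ y ∈ nb d x, g y
      = ∑ i, (g (Function.update x i (x i + 1)) + g (Function.update x i (x i + (-1)))) := by
  have hinj : ∀ p ∈ (Finset.univ : Finset (Fin d × Bool)), ∀ q ∈ (Finset.univ : Finset (Fin d × Bool)),
      Function.update x p.1 (x p.1 + (if p.2 then (1:ℤ) else -1))
        = Function.update x q.1 (x q.1 + (if q.2 then (1:ℤ) else -1)) → p = q := by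
    rintro ⟨i, b⟩ - ⟨j, c⟩ - h
    by_cases hij : i = j
    · subst hij
      have hi := congrFun h i
      simp only [Function.update_self] at hi
      cases b <;> cases c <;> simp_all
    · have hi := congrFun h i
      rw [Function.update_self, Function.update_of_ne (fun hh => hij hh)] at hi
      cases b <;> simp at hi
  rw [nb, Finset.sum_image hinj, Fintype.sum_prod_type]
  refine Finset.sum_congr rfl fun i _ => ?_
  rw [Fintype.sum_bool]
  simp

lemma mem_nb_bound {d R : ℕ} {x : Fin d → ℤ} (hx : ∀ i, (x i).natAbs ≤ R) :
    ∀ y ∈ nb d x, ∀ i, (y i).natAbs ≤ R + 1 := by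
  intro y hy i
  obtain ⟨⟨j, b⟩, -, rfl⟩ := Finset.mem_image.mp hy
  by_cases hij : i = j
  · subst hij
    rw [Function.update_self]
    have := hx i
    cases b <;> simp <;> omega
  · rw [Function.update_of_ne hij]
    exact (hx i).trans (Nat.le_succ R)


/-- in any finite volume `V`, the set of stabilizing toppling vectors for any
configuration `η` is nonempty and has a pointwise least element `m_V^η`; in particular the
finite-volume abelian sandpile stabilization equation always has a minimal solution. -/
theorem exists_minimal_stabilizer (d : ℕ) (hd : 1 ≤ d)
    (V : Finset (Fin d → ℤ)) (η : (Fin d → ℤ) → ℕ) :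
    ∃ m : (Fin d → ℤ) → ℕ, IsMinStab d V η m := by
  classical
  set R : ℕ := V.sup (fun x => Finset.univ.sup (fun i => (x i).natAbs)) with hR
  set K : ℕ := V.sup η with hK
  set A : ℕ := d * (R + 1) ^ 2 with hA
  set m₀ : (Fin d → ℤ) → ℕ := fun x => K * (A - ∑ i, (x i).natAbs ^ 2) with hm₀
  have hcoord : ∀ x ∈ V, ∀ i, (x i).natAbs ≤ R := by
    intro x hx i
    have h1 : (x i).natAbs ≤ Finset.univ.sup (fun i => (x i).natAbs) :=
      Finset.le_sup (f := fun i => (x i).natAbs) (Finset.mem_univ i)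
    have h2 : Finset.univ.sup (fun i => (x i).natAbs) ≤ R :=
      Finset.le_sup (f := fun x : Fin d → ℤ => Finset.univ.sup (fun i => (x i).natAbs)) hx
    exact h1.trans h2
  have hqle : ∀ y : Fin d → ℤ, (∀ i, (y i).natAbs ≤ R + 1) → (∑ i, (y i).natAbs ^ 2) ≤ A := by
    intro y hy
    calc ∑ i, (y i).natAbs ^ 2 ≤ ∑ _i : Fin d, (R + 1) ^ 2 :=
          Finset.sum_le_sum (fun i _ => Nat.pow_le_pow_left (hy i) 2)
      _ = d * (R + 1) ^ 2 := by simp [Finset.sum_const, Finset.card_univ]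
  have hcast : ∀ y : Fin d → ℤ, (∑ i, (y i).natAbs ^ 2) ≤ A →
      (m₀ y : ℤ) = K * ((A : ℤ) - ∑ i, (y i) ^ 2) := by
    intro y hy
    have hc : ((∑ i, (y i).natAbs ^ 2 : ℕ) : ℤ) = ∑ i, (y i) ^ 2 := by
      push_cast
      exact Finset.sum_congr rfl (fun i _ => sq_abs (y i))
    simp only [hm₀]
    rw [Nat.cast_mul, Nat.cast_sub hy, hc]
  have hstab₀ : Stabilizes d V η m₀ := by
    intro x hx
    have hxR : ∀ i, (x i).natAbs ≤ R := hcoord x hx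
    have hxR1 : ∀ i, (x i).natAbs ≤ R + 1 := fun i => (hxR i).trans (Nat.le_succ R)
    have hx0 : (m₀ x : ℤ) = K * ((A : ℤ) - ∑ i, (x i) ^ 2) := hcast x (hqle x hxR1)
    have h1 : ∑ y ∈ V.filter (fun y => adj d x y), (m₀ y : ℤ) ≤ ∑ y ∈ nb d x, (m₀ y : ℤ) :=
      Finset.sum_le_sum_of_subset_of_nonneg (mem_nb_adj x)
        (fun y _ _ => Int.natCast_nonneg _)
    have h2 : ∑ y ∈ nb d x, (m₀ y : ℤ)
        = (K : ℤ) * (2 * d * ((A : ℤ) - ∑ i, (x i) ^ 2) - 2 * d) := by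
      rw [sum_nb]
      have hterm : ∀ i : Fin d,
          (m₀ (Function.update x i (x i + 1)) : ℤ) + (m₀ (Function.update x i (x i + (-1))) : ℤ)
          = (K : ℤ) * (2 * (A : ℤ) - 2 * (∑ j, (x j) ^ 2) - 2) := by
        intro i
        have hb1 := mem_nb_bound hxR _ (Finset.mem_image.mpr ⟨(i, true), Finset.mem_univ _, rfl⟩)
        have hb2 := mem_nb_bound hxR _ (Finset.mem_image.mpr ⟨(i, false), Finset.mem_univ _, rfl⟩)
        simp only [if_pos, if_neg, Bool.false_eq_true, not_false_iff, ite_true, ite_false] at hb1 hb2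
        rw [hcast _ (hqle _ hb1), hcast _ (hqle _ hb2), Q_update, Q_update]
        ring
      rw [Finset.sum_congr rfl (fun i _ => hterm i), Finset.sum_const, Finset.card_univ,
        Fintype.card_fin, nsmul_eq_mul]
      ring
    have hηK : (η x : ℤ) ≤ (K : ℤ) := by exact_mod_cast Finset.le_sup hx
    have hd' : (1 : ℤ) ≤ (d : ℤ) := by exact_mod_cast hd
    have hK0 : (0 : ℤ) ≤ (K : ℤ) := Int.natCast_nonneg _
    have hlap : 2 * (d : ℤ) * (K : ℤ) ≤ lapV d V m₀ x := by
      unfold lapV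
      rw [hx0]
      have := h1.trans_eq h2
      nlinarith [this]
    nlinarith [hlap, hηK, hd', hK0]
  have hne : ∀ x : Fin d → ℤ, {n | ∃ m, Stabilizes d V η m ∧ m x = n}.Nonempty :=
    fun x => ⟨m₀ x, m₀, hstab₀, rfl⟩
  set μ : (Fin d → ℤ) → ℕ := fun x => sInf {n | ∃ m, Stabilizes d V η m ∧ m x = n} with hμ
  have hμle : ∀ m', Stabilizes d V η m' → ∀ x, μ x ≤ m' x :=
    fun m' h x => Nat.sInf_le ⟨m', h, rfl⟩
  have hμstab : Stabilizes d V η μ := by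
    intro x hx
    obtain ⟨m, hm, hmx⟩ := Nat.sInf_mem (hne x)
    have hle : lapV d V m x ≤ lapV d V μ x := by
      unfold lapV
      have hsum : ∑ y ∈ V.filter (fun y => adj d x y), (μ y : ℤ)
          ≤ ∑ y ∈ V.filter (fun y => adj d x y), (m y : ℤ) :=
        Finset.sum_le_sum (fun y _ => by exact_mod_cast hμle m hm y)
      have hx' : (μ x : ℤ) = (m x : ℤ) := by exact_mod_cast hmx.symm
      rw [hx']
      linarith
    have := hm x hx
    linarith
  exact ⟨μ, hμstab, fun m' h x _ => hμle m' h x⟩
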